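/- There is no E₀-connection ∇ on E₀ (with respect to the anchor ρ and the bracket [·,·]_{E₀}) whose torsion T(X,Y) = ∇_X Y − ∇_Y X − [X,Y]_{E₀} and curvature R(X,Y)Z = ∇_X ∇_Y Z − ∇_Y ∇_X Z − ∇_{[X,Y]_{E₀}} Z both vanish identically on all sections X, Y, Z of E₀. -/

import Mathlib

noncomputable section

set_option maxHeartbeats 1000000
set_option synthInstance.maxHeartbeats 400000

open Matrix

/-- The ℝ-algebra of smooth (C^∞) functions on ℝ². -/
def Sm : Subalgebra ℝ ((ℝ × ℝ) → ℝ) where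
  carrier := {f | ContDiff ℝ (⊤ : ℕ∞) f}
  mul_mem' := fun {a b} (hf : ContDiff ℝ (⊤ : ℕ∞) a) (hg : ContDiff ℝ (⊤ : ℕ∞) b) => hf.mul hg
  add_mem' := fun {a b} (hf : ContDiff ℝ (⊤ : ℕ∞) a) (hg : ContDiff ℝ (⊤ : ℕ∞) b) => hf.add hg
  algebraMap_mem' r :=
    show ContDiff ℝ (⊤ : ℕ∞) (algebraMap ℝ ((ℝ × ℝ) → ℝ) r) from contDiff_const

/-- Smooth functions on the plane. -/
abbrev S : Type := Sm

lemma mem_Sm_iff {f : (ℝ × ℝ) → ℝ} : f ∈ Sm ↔ ContDiff ℝ (⊤ : ℕ∞) f := by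
  rw [Sm]; rfl

lemma smooth_coe (f : S) : ContDiff ℝ (⊤ : ℕ∞) (f : (ℝ × ℝ) → ℝ) := mem_Sm_iff.mp f.2

/-- Sections of the trivial bundle `ℝ² × M₂(ℝ)`, as 2×2 matrices of smooth functions. -/
abbrev E₀ : Type := Matrix (Fin 2) (Fin 2) S

/-- The section `X_j^i`: the constant elementary matrix with 1 in entry (i,j). -/
def sb (i j : Fin 2) : E₀ := Matrix.single i j 1

/-- First coordinate function. -/
def x₁ : S := ⟨fun p => p.1, mem_Sm_iff.mpr contDiff_fst⟩
/-- Second coordinate function. -/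
def x₂ : S := ⟨fun p => p.2, mem_Sm_iff.mpr contDiff_snd⟩
/-- Coordinates. -/
def xc : Fin 2 → S := ![x₁, x₂]

/-- Directional derivative of a smooth function, in direction `v`. -/
def pdAux (v : ℝ × ℝ) (f : S) : S :=
  ⟨fun p => fderiv ℝ (f : (ℝ × ℝ) → ℝ) p v,
    mem_Sm_iff.mpr (((smooth_coe f).fderiv_right (le_refl _)).clm_apply contDiff_const)⟩

/-- The vector field (derivation) `∂/∂v` on `ℝ²`. -/
def pd (v : ℝ × ℝ) : Derivation ℝ S S where
  toFun := pdAux v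
  map_add' f g := by
    ext p
    have hf : DifferentiableAt ℝ (f : (ℝ × ℝ) → ℝ) p :=
      ((smooth_coe f).differentiable (by simp)).differentiableAt
    have hg : DifferentiableAt ℝ (g : (ℝ × ℝ) → ℝ) p :=
      ((smooth_coe g).differentiable (by simp)).differentiableAt
    have h1 : ((f + g : S) : (ℝ × ℝ) → ℝ) = fun q => (f : (ℝ × ℝ) → ℝ) q + (g : (ℝ × ℝ) → ℝ) q := rfl
    simp only [pdAux, h1, AddMemClass.coe_add, Pi.add_apply]
    rw [show (fun q => (f : (ℝ × ℝ) → ℝ) q + (g : (ℝ × ℝ) → ℝ) q) = (f : (ℝ × ℝ) → ℝ) + g from rfl,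
      fderiv_add hf hg]
    simp
  map_smul' c f := by
    ext p
    have h1 : ((c • f : S) : (ℝ × ℝ) → ℝ) = fun q => c * (f : (ℝ × ℝ) → ℝ) q := rfl
    have hf : DifferentiableAt ℝ (f : (ℝ × ℝ) → ℝ) p :=
      ((smooth_coe f).differentiable (by simp)).differentiableAt
    simp only [pdAux]
    rw [h1, fderiv_const_mul hf]
    simp
  map_one_eq_zero' := by
    ext p
    have h1 : ((1 : S) : (ℝ × ℝ) → ℝ) = fun _ => (1 : ℝ) := rfl
    have h2 : fderiv ℝ (1 : (ℝ × ℝ) → ℝ) p = 0 := fderiv_const_apply 1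
    simp [pdAux, h1, h2]
  leibniz' f g := by
    ext p
    have hf : DifferentiableAt ℝ (f : (ℝ × ℝ) → ℝ) p :=
      ((smooth_coe f).differentiable (by simp)).differentiableAt
    have hg : DifferentiableAt ℝ (g : (ℝ × ℝ) → ℝ) p :=
      ((smooth_coe g).differentiable (by simp)).differentiableAt
    have h1 : ((f * g : S) : (ℝ × ℝ) → ℝ) = fun q => (f : (ℝ × ℝ) → ℝ) q * (g : (ℝ × ℝ) → ℝ) q := rfl
    simp [pdAux, h1, fderiv_mul hf hg]
    rw [show (fun q => (f : (ℝ × ℝ) → ℝ) q * (g : (ℝ × ℝ) → ℝ) q) = (f : (ℝ × ℝ) → ℝ) * g from rfl,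
      fderiv_mul hf hg]
    simp
    try ring

/-- Standard basis vectors of ℝ². -/
def ev : Fin 2 → ℝ × ℝ := ![(1, 0), (0, 1)]

/-- The anchor `ρ` of `E₀`: `ρ(X_j^i) = (x^i)² ∂/∂x^j`, extended `C^∞(ℝ²)`-linearly. -/
def anchor (X : E₀) : Derivation ℝ S S :=
  ∑ i : Fin 2, ∑ j : Fin 2, (X i j * xc i ^ 2) • pd (ev j)

/-- The section `𝒳₁ = (x²)² X₁¹ − (x¹)² X₁²`. -/
def 𝓧₁ : E₀ := x₂ ^ 2 • sb 0 0 - x₁ ^ 2 • sb 1 0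
/-- The section `𝒳₂ = (x²)² X₂¹ − (x¹)² X₂²`. -/
def 𝓧₂ : E₀ := x₂ ^ 2 • sb 0 1 - x₁ ^ 2 • sb 1 1

/-- The almost Lie bracket axioms for `(E₀, ρ)`, together with the defining values
`[X_j^i, X_l^k] = 2x^k δ_j^k X_l^i − 2x^i δ_l^i X_j^k` on the generators: ℝ-bilinearity,
skew-symmetry, the Leibniz rule, and the values on generators. -/
def IsBracket (L : E₀ → E₀ → E₀) : Prop :=
  (∀ X X' Y, L (X + X') Y = L X Y + L X' Y) ∧
  (∀ X Y Y', L X (Y + Y') = L X Y + L X Y') ∧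
  (∀ (c : ℝ) (X Y : E₀), L (c • X) Y = c • L X Y) ∧
  (∀ (c : ℝ) (X Y : E₀), L X (c • Y) = c • L X Y) ∧
  (∀ X Y, L Y X = - L X Y) ∧
  (∀ (f : S) (X Y : E₀), L X (f • Y) = anchor X f • Y + f • L X Y) ∧
  (∀ i j k l, L (sb i j) (sb k l) =
    (if j = k then (2 : S) * xc k else 0) • sb i l
      - (if l = i then (2 : S) * xc i else 0) • sb k j)


/-- The Koszul axioms for an `E₀`-connection on `E₀` (with respect to the anchor `ρ`):
`C^∞(ℝ²)`-linearity in the first argument, additivity in the second argument, and the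
Leibniz rule. -/
def IsConn (D : E₀ → E₀ → E₀) : Prop :=
  (∀ X X' Y, D (X + X') Y = D X Y + D X' Y) ∧
  (∀ (f : S) (X Y : E₀), D (f • X) Y = f • D X Y) ∧
  (∀ X Y Y', D X (Y + Y') = D X Y + D X Y') ∧
  (∀ (f : S) (X Y : E₀), D X (f • Y) = anchor X f • Y + f • D X Y)


lemma S_ext {f g : S} (h : ∀ p, (f : (ℝ×ℝ)→ℝ) p = (g : (ℝ×ℝ)→ℝ) p) : f = g :=
  Subtype.ext (funext h)


lemma pd_const (j : Fin 2) : pd (ev j) (2:S) = 0 := by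
  apply S_ext; intro p
  show fderiv ℝ _ p _ = _
  rw [show (((2:S)) : (ℝ×ℝ)→ℝ) = fun _ : ℝ×ℝ => (2:ℝ) from rfl, fderiv_fun_const]
  rfl

lemma fd0 (p v : ℝ×ℝ) : fderiv ℝ ((xc 0 : S) : (ℝ×ℝ)→ℝ) p v = v.1 := by
  rw [show ((xc 0 : S) : (ℝ×ℝ)→ℝ) = fun q : ℝ×ℝ => q.1 from rfl, hasFDerivAt_fst.fderiv]
  rfl

lemma fd1 (p v : ℝ×ℝ) : fderiv ℝ ((xc 1 : S) : (ℝ×ℝ)→ℝ) p v = v.2 := by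
  rw [show ((xc 1 : S) : (ℝ×ℝ)→ℝ) = fun q : ℝ×ℝ => q.2 from rfl, hasFDerivAt_snd.fderiv]
  rfl

lemma pd_xc (j m : Fin 2) : pd (ev j) (xc m) = if m = j then 1 else 0 := by
  apply S_ext; intro p
  show fderiv ℝ _ p _ = _
  fin_cases m <;> fin_cases j <;>
    simp [fd0, fd1, ev] <;> rfl

lemma anc (a b m : Fin 2) : anchor (sb a b) ((2:S) * xc m) =
    (if m = b then (2:S) else 0) * xc a ^ 2 := by
  have h : anchor (sb a b) =
      ((sb a b 0 0 * xc 0 ^ 2) • pd (ev 0) + (sb a b 0 1 * xc 0 ^ 2) • pd (ev 1)) +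
      ((sb a b 1 0 * xc 1 ^ 2) • pd (ev 0) + (sb a b 1 1 * xc 1 ^ 2) • pd (ev 1)) := by
    rw [anchor, Fin.sum_univ_two, Fin.sum_univ_two, Fin.sum_univ_two]
  rw [h]
  simp only [Derivation.add_apply, Derivation.smul_apply]
  fin_cases a <;> fin_cases b <;> fin_cases m <;>
    simp [sb, Matrix.single, pd_const, pd_xc, smul_eq_mul] <;> ring

noncomputable def evp : S →+* ℝ :=
  (Pi.evalRingHom (fun _ : ℝ×ℝ => ℝ) ((1:ℝ), (0:ℝ))).comp (Subalgebra.val Sm).toRingHom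

lemma evp_x0 : evp (xc 0) = 1 := rfl
lemma evp_x1 : evp (xc 1) = 0 := rfl

theorem statement6 (L : E₀ → E₀ → E₀) (hL : IsBracket L) :
    ¬ ∃ D : E₀ → E₀ → E₀, IsConn D ∧
      (∀ X Y : E₀, D X Y - D Y X - L X Y = 0) ∧
      (∀ X Y Z : E₀, D X (D Y Z) - D Y (D X Z) - D (L X Y) Z = 0) := by
  rintro ⟨D, ⟨hD1, hD2, hD3, hD4⟩, hT, hR⟩
  obtain ⟨hB1, hB2, hB3, hB4, hsk, hlei, hgen⟩ := hL
  have hDsub : ∀ X Y Y', D X (Y - Y') = D X Y - D X Y' := by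
    intro X Y Y'
    have h := (hD3 X (Y - Y') Y').symm
    rw [sub_add_cancel] at h
    exact eq_sub_of_add_eq h
  have hLD : ∀ X Y, L X Y = D X Y - D Y X := fun X Y => (sub_eq_zero.mp (hT X Y)).symm
  have hDL : ∀ X Y Z, D (L X Y) Z = D X (D Y Z) - D Y (D X Z) :=
    fun X Y Z => (sub_eq_zero.mp (hR X Y Z)).symm
  have jac : ∀ X Y Z, L (L X Y) Z + L (L Y Z) X + L (L Z X) Y = 0 := by
    intro X Y Z
    rw [hLD (L X Y) Z, hLD (L Y Z) X, hLD (L Z X) Y, hDL X Y Z, hDL Y Z X, hDL Z X Y,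
      hLD X Y, hLD Y Z, hLD Z X, hDsub, hDsub, hDsub]
    abel
  have hLsub1 : ∀ X X' Y, L (X - X') Y = L X Y - L X' Y := by
    intro X X' Y
    have h := (hB1 (X - X') X' Y).symm
    rw [sub_add_cancel] at h
    exact eq_sub_of_add_eq h
  have hlei1 : ∀ (f : S) (X Y : E₀), L (f • X) Y = f • L X Y - anchor Y f • X := by
    intro f X Y
    rw [hsk Y (f • X), hlei f Y X, hsk X Y, smul_neg, neg_add, neg_neg]
    abel
  have n01 : ((0:Fin 2) = 1) = False := by simp
  have n10 : ((1:Fin 2) = 0) = False := by simp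
  have b1 : L (sb 0 0) (sb 0 1) = ((2:S) * xc 0) • sb 0 1 := by
    rw [hgen]; simp [n01, n10]
  have b2 : L (sb 1 0) (sb 0 1) = ((2:S) * xc 0) • sb 1 1 - ((2:S) * xc 1) • sb 0 0 := by
    rw [hgen]; simp [n01, n10]
  have b3 : L (sb 0 1) (sb 1 0) = ((2:S) * xc 1) • sb 0 0 - ((2:S) * xc 0) • sb 1 1 := by
    rw [hgen]; simp [n01, n10]
  have b4 : L (sb 0 0) (sb 0 0) = 0 := by
    rw [hgen]; simp
  have b5 : L (sb 1 1) (sb 0 0) = 0 := by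
    rw [hgen]; simp [n01, n10]
  have b6 : L (sb 1 0) (sb 0 0) = ((2:S) * xc 0) • sb 1 0 := by
    rw [hgen]; simp [n01, n10]
  have E := jac (sb 0 0) (sb 0 1) (sb 1 0)
  rw [b1, b3, b6] at E
  rw [hLsub1] at E
  simp only [hlei1] at E
  simp only [b2, b3, b4, b5] at E
  simp only [anc] at E
  have h11 := congrFun (congrFun E 1) 1
  simp only [Matrix.add_apply, Matrix.sub_apply, Matrix.smul_apply, Matrix.zero_apply,
    smul_eq_mul, sb, Matrix.single, Matrix.of_apply, n01, n10] at h11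
  have hp := congrArg evp h11
  simp only [_root_.map_mul, map_sub, _root_.map_add, map_pow, _root_.map_zero, _root_.map_one, _root_.map_ofNat,
    evp_x0, evp_x1, n01, n10, if_true, if_false, eq_self_iff_true, and_true, and_false,
    true_and, false_and, mul_zero, zero_mul, mul_one, one_mul] at hp
  norm_num at hp
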